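/- The matrix singular value thresholding operator solves the nuclear-norm proximal problem: for any matrix T ∈ ℝ^{m×n} with SVD T = UΣVᵀ and τ > 0, the matrix SVT_τ(T) := U·max(Σ−τ,0)·Vᵀ is the unique minimizer of X ↦ τ‖X‖_* + ½‖X−T‖_F². -/

import Mathlib

open Matrix

/-- The nuclear norm of a real matrix: the sum of its singular values,
realized as the square roots of the eigenvalues of `Aᴴ * A`. -/
noncomputable def nuclearNorm {m n : ℕ} (A : Matrix (Fin m) (Fin n) ℝ) : ℝ :=
  ∑ i, Real.sqrt ((Matrix.isHermitian_conjTranspose_mul_self A).eigenvalues i)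

/-- The Frobenius norm of a real matrix. -/
noncomputable def frobNorm {m n : ℕ} (A : Matrix (Fin m) (Fin n) ℝ) : ℝ :=
  Real.sqrt (∑ i, ∑ j, (A i j) ^ 2)

namespace SVTAux

open Polynomial

lemma my_charpoly_conj {N : ℕ} (P M Q : Matrix (Fin N) (Fin N) ℝ)
    (hPQ : P * Q = 1) : (P * M * Q).charpoly = M.charpoly := by
  have hmapPQ : (P.map C) * (Q.map C) = 1 := by
    rw [← Matrix.map_mul, hPQ]; simp
  have h1 : charmatrix (P * M * Q) = P.map C * charmatrix M * Q.map C := by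
    unfold charmatrix
    rw [Matrix.mul_sub, Matrix.sub_mul]
    congr 1
    · rw [mul_assoc, (scalar_commute (X : ℝ[X]) (fun r => Commute.all _ r) (Q.map C)).eq,
        ← mul_assoc, hmapPQ, one_mul]
    · simp [RingHom.mapMatrix_apply, ← Matrix.map_mul]
  have hdet : det (P.map C) * det (Q.map C) = 1 := by
    rw [← det_mul, hmapPQ, det_one]
  rw [Matrix.charpoly, Matrix.charpoly, h1, det_mul, det_mul]
  calc (P.map C).det * (charmatrix M).det * (Q.map C).det
      = (P.map C).det * (Q.map C).det * (charmatrix M).det := by ring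
    _ = (charmatrix M).det := by rw [hdet, one_mul]

lemma my_charpoly_diagonal {N : ℕ} (d : Fin N → ℝ) :
    (diagonal d).charpoly = ∏ i, (X - C (d i)) := by
  have h : charmatrix (diagonal d) = diagonal (fun i => X - C (d i)) := by
    ext i j
    by_cases hij : i = j
    · subst hij; simp [charmatrix_apply_eq]
    · simp [charmatrix_apply_ne _ _ _ hij, diagonal_apply_ne _ hij]
  rw [Matrix.charpoly, h, det_diagonal]

/-- The sum of square roots of the roots of the characteristic polynomial. -/
noncomputable def sqrtRootsSum {N : ℕ} (M : Matrix (Fin N) (Fin N) ℝ) : ℝ :=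
  (M.charpoly.roots.map Real.sqrt).sum

lemma my_hermitian_charpoly {N : ℕ} (M : Matrix (Fin N) (Fin N) ℝ) (hM : M.IsHermitian) :
    M.charpoly = ∏ i, (X - C (hM.eigenvalues i)) := by
  have hspec := hM.spectral_theorem
  have hW : (hM.eigenvectorUnitary : Matrix (Fin N) (Fin N) ℝ) *
      (star (hM.eigenvectorUnitary : Matrix (Fin N) (Fin N) ℝ)) = 1 :=
    (Matrix.mem_unitaryGroup_iff).mp hM.eigenvectorUnitary.2
  have : M = (hM.eigenvectorUnitary : Matrix (Fin N) (Fin N) ℝ) *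
      diagonal hM.eigenvalues * (star (hM.eigenvectorUnitary : Matrix (Fin N) (Fin N) ℝ)) := by
    rw [Unitary.conjStarAlgAut_apply] at hspec
    simp only [RCLike.ofReal_real_eq_id, Function.id_comp] at hspec
    convert hspec using 3
  conv_lhs => rw [this]
  rw [my_charpoly_conj _ _ _ hW, my_charpoly_diagonal]

lemma my_roots_of_charpoly_prod {N : ℕ} (M : Matrix (Fin N) (Fin N) ℝ) (lam : Fin N → ℝ)
    (h : M.charpoly = ∏ i, (X - C (lam i))) :
    M.charpoly.roots = Finset.univ.val.map lam := by
  rw [h]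
  have : (∏ i, (X - C (lam i))) =
      ((Finset.univ.val.map lam).map fun a => X - C a).prod := by
    rw [Multiset.map_map]; rfl
  rw [this, Polynomial.roots_multiset_prod_X_sub_C]

lemma my_sqrtRootsSum_eq {N : ℕ} (M : Matrix (Fin N) (Fin N) ℝ) (hM : M.IsHermitian) :
    sqrtRootsSum M = ∑ i, Real.sqrt (hM.eigenvalues i) := by
  rw [sqrtRootsSum, my_roots_of_charpoly_prod M _ (my_hermitian_charpoly M hM),
    Multiset.map_map]
  rfl

lemma nuclearNorm_eq_sqrtRootsSum {m n : ℕ} (A : Matrix (Fin m) (Fin n) ℝ) :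
    nuclearNorm A = sqrtRootsSum (Aᵀ * A) := by
  have h : nuclearNorm A = sqrtRootsSum (Aᴴ * A) :=
    (my_sqrtRootsSum_eq _ (Matrix.isHermitian_conjTranspose_mul_self A)).symm
  rw [h, conjTranspose_eq_transpose_of_trivial]

lemma gram_conj {m n : ℕ} {U : Matrix (Fin m) (Fin m) ℝ} {V : Matrix (Fin n) (Fin n) ℝ}
    (hU : Uᵀ * U = 1) (Z : Matrix (Fin m) (Fin n) ℝ) :
    (U * Z * Vᵀ)ᵀ * (U * Z * Vᵀ) = V * (Zᵀ * Z) * Vᵀ := by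
  simp only [transpose_mul, transpose_transpose, Matrix.mul_assoc]
  rw [show Uᵀ * (U * (Z * Vᵀ)) = Z * Vᵀ by rw [← Matrix.mul_assoc, hU, Matrix.one_mul]]

lemma nuclearNorm_conj {m n : ℕ} {U : Matrix (Fin m) (Fin m) ℝ} {V : Matrix (Fin n) (Fin n) ℝ}
    (hU : Uᵀ * U = 1) (hVV : V * Vᵀ = 1) (Z : Matrix (Fin m) (Fin n) ℝ) :
    nuclearNorm (U * Z * Vᵀ) = nuclearNorm Z := by
  rw [nuclearNorm_eq_sqrtRootsSum, nuclearNorm_eq_sqrtRootsSum, gram_conj hU,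
    sqrtRootsSum, sqrtRootsSum, my_charpoly_conj _ _ _ hVV]

lemma nuclearNorm_of_diag_gram {m n : ℕ} {D : Matrix (Fin m) (Fin n) ℝ} {g : Fin n → ℝ}
    (h : Dᵀ * D = diagonal g) : nuclearNorm D = ∑ j, Real.sqrt (g j) := by
  rw [nuclearNorm_eq_sqrtRootsSum, h, sqrtRootsSum,
    my_roots_of_charpoly_prod _ g (my_charpoly_diagonal g), Multiset.map_map]
  rfl

lemma frob_sq {m n : ℕ} (A : Matrix (Fin m) (Fin n) ℝ) :
    frobNorm A ^ 2 = ∑ i, ∑ j, A i j ^ 2 := by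
  rw [frobNorm, Real.sq_sqrt]
  positivity

lemma sum_sq_eq_trace {m n : ℕ} (A : Matrix (Fin m) (Fin n) ℝ) :
    ∑ i, ∑ j, A i j ^ 2 = trace (Aᵀ * A) := by
  rw [trace]
  simp only [diag_apply, mul_apply, transpose_apply, sq]
  exact Finset.sum_comm

lemma frob_conj {m n : ℕ} {U : Matrix (Fin m) (Fin m) ℝ} {V : Matrix (Fin n) (Fin n) ℝ}
    (hU : Uᵀ * U = 1) (hV : Vᵀ * V = 1) (Z : Matrix (Fin m) (Fin n) ℝ) :
    frobNorm (U * Z * Vᵀ) = frobNorm Z := by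
  rw [frobNorm, frobNorm, sum_sq_eq_trace, sum_sq_eq_trace, gram_conj hU,
    Matrix.trace_mul_cycle, ← Matrix.mul_assoc, hV, Matrix.one_mul]

lemma trace_transpose_mul_eq {m n : ℕ} (B C : Matrix (Fin m) (Fin n) ℝ) :
    trace (Bᵀ * C) = ∑ j, ∑ i, B i j * C i j := by
  rw [trace]
  simp only [diag_apply, mul_apply, transpose_apply]

lemma diag_abs_le_nuclearNorm {m n : ℕ} (Y : Matrix (Fin m) (Fin n) ℝ) :
    ∑ i : Fin m, ∑ j : Fin n, (if (i : ℕ) = (j : ℕ) then |Y i j| else 0) ≤ nuclearNorm Y := by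
  classical
  set hM := Matrix.isHermitian_conjTranspose_mul_self Y with hMdef
  set W : Matrix (Fin n) (Fin n) ℝ := (hM.eigenvectorUnitary : Matrix (Fin n) (Fin n) ℝ)
    with hWdef
  have hWW' : W * Wᵀ = 1 := by
    have := (Matrix.mem_unitaryGroup_iff).mp hM.eigenvectorUnitary.2
    simp [star_eq_conjTranspose, conjTranspose_eq_transpose_of_trivial] at this; exact this
  have hW'W : Wᵀ * W = 1 := by
    have := (Matrix.mem_unitaryGroup_iff').mp hM.eigenvectorUnitary.2
    simp [star_eq_conjTranspose, conjTranspose_eq_transpose_of_trivial] at this; exact this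
  have hYY : Yᴴ = Yᵀ := conjTranspose_eq_transpose_of_trivial Y
  have hdiagM : Wᵀ * (Yᴴ * Y) * W = diagonal hM.eigenvalues := by
    have := hM.conjStarAlgAut_star_eigenvectorUnitary
    simp [Unitary.conjStarAlgAut_apply, star_eq_conjTranspose, conjTranspose_eq_transpose_of_trivial,
      Function.comp] at this; exact this
  set A : Matrix (Fin m) (Fin n) ℝ :=
    Matrix.of (fun i j => if (i : ℕ) = (j : ℕ) then (if Y i j < 0 then (-1 : ℝ) else 1) else 0)
    with hAdef
  have step1 : ∑ i : Fin m, ∑ j : Fin n, (if (i : ℕ) = (j : ℕ) then |Y i j| else 0)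
      = trace (Aᵀ * Y) := by
    rw [trace_transpose_mul_eq, Finset.sum_comm]
    refine Finset.sum_congr rfl fun i _ => Finset.sum_congr rfl fun j _ => ?_
    simp only [hAdef, Matrix.of_apply]
    split_ifs with h1 h2
    · rw [abs_of_neg h2]; ring
    · rw [abs_of_nonneg (not_lt.mp h2)]; ring
    · ring
  have step2 : trace (Aᵀ * Y) = trace ((A * W)ᵀ * (Y * W)) := by
    have e : (A * W)ᵀ * (Y * W) = Wᵀ * ((Aᵀ * Y) * W) := by
      simp only [transpose_mul, Matrix.mul_assoc]
    rw [e, Matrix.trace_mul_comm (Wᵀ), Matrix.mul_assoc, hWW', Matrix.mul_one]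
  have colY : ∀ j, ∑ i : Fin m, (Y * W) i j ^ 2 = hM.eigenvalues j := by
    intro j
    have h2 : (Y * W)ᵀ * (Y * W) = diagonal hM.eigenvalues := by
      rw [← hdiagM, hYY]
      simp only [transpose_mul, Matrix.mul_assoc]
    have h1 := congrArg (fun M => M j j) h2
    simp only [mul_apply, transpose_apply, diagonal_apply_eq] at h1
    rw [← h1]
    refine Finset.sum_congr rfl fun i _ => ?_
    rw [mul_apply, sq]
  have hAA : Aᵀ * A = diagonal (fun k : Fin n => if (k : ℕ) < m then (1 : ℝ) else 0) := by
    ext k l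
    rw [mul_apply]
    by_cases hkl : k = l
    · subst hkl
      rw [diagonal_apply_eq]
      by_cases hk : (k : ℕ) < m
      · rw [Finset.sum_eq_single (⟨(k : ℕ), hk⟩ : Fin m)]
        · simp only [hAdef, Matrix.of_apply, transpose_apply, if_pos rfl]
          split_ifs <;> norm_num
        · intro b _ hb
          simp only [hAdef, Matrix.of_apply, transpose_apply]
          rw [if_neg (fun hbk => hb (Fin.ext hbk)), zero_mul]
        · intro h; exact absurd (Finset.mem_univ _) h
      · rw [if_neg hk]
        refine Finset.sum_eq_zero fun i _ => ?_
        simp only [hAdef, Matrix.of_apply, transpose_apply]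
        rw [if_neg (fun hik => hk (lt_of_eq_of_lt (Eq.symm hik) i.isLt)), zero_mul]
    · rw [diagonal_apply_ne _ hkl]
      refine Finset.sum_eq_zero fun i _ => ?_
      simp only [hAdef, Matrix.of_apply, transpose_apply]
      by_cases hik : (i : ℕ) = (k : ℕ)
      · have hil : ¬ (i : ℕ) = (l : ℕ) :=
          fun hil => hkl (Fin.ext (hik.symm.trans hil))
        rw [if_neg hil, mul_zero]
      · rw [if_neg hik, zero_mul]
  have colA : ∀ j, ∑ i : Fin m, (A * W) i j ^ 2 ≤ 1 := by
    intro j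
    have e : (A * W)ᵀ * (A * W) =
        Wᵀ * (diagonal (fun k : Fin n => if (k : ℕ) < m then (1 : ℝ) else 0) * W) := by
      rw [← hAA]
      simp only [transpose_mul, Matrix.mul_assoc]
    have h1 := congrArg (fun M => M j j) e
    simp only [mul_apply, transpose_apply, diagonal_apply, ite_mul, zero_mul,
      Finset.sum_ite_eq, Finset.mem_univ, if_true] at h1
    have h2 : ∑ i : Fin m, (A * W) i j ^ 2 =
        ∑ k : Fin n, W k j * (if (k : ℕ) < m then 1 * W k j else 0) := by
      rw [← h1]
      refine Finset.sum_congr rfl fun i _ => ?_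
      rw [mul_apply, sq]
    rw [h2]
    have h4 : ∑ k : Fin n, W k j ^ 2 = 1 := by
      have := congrArg (fun M => M j j) hW'W
      simpa [mul_apply, transpose_apply, sq, Matrix.one_apply] using this
    calc ∑ k : Fin n, W k j * (if (k : ℕ) < m then 1 * W k j else 0)
        ≤ ∑ k : Fin n, W k j ^ 2 := by
          refine Finset.sum_le_sum fun k _ => ?_
          split_ifs <;> nlinarith [sq_nonneg (W k j)]
      _ = 1 := h4
  rw [step1, step2, trace_transpose_mul_eq]
  have hnn : nuclearNorm Y = ∑ j, Real.sqrt (hM.eigenvalues j) := rfl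
  rw [hnn]
  refine Finset.sum_le_sum fun j _ => ?_
  have hcs := Finset.sum_mul_sq_le_sq_mul_sq Finset.univ (fun i => (A * W) i j)
    (fun i => (Y * W) i j)
  have hb : (∑ i : Fin m, (A * W) i j * (Y * W) i j) ^ 2 ≤ hM.eigenvalues j := by
    calc (∑ i : Fin m, (A * W) i j * (Y * W) i j) ^ 2
        ≤ (∑ i : Fin m, (A * W) i j ^ 2) * (∑ i : Fin m, (Y * W) i j ^ 2) := hcs
      _ ≤ 1 * (∑ i : Fin m, (Y * W) i j ^ 2) := by
          apply mul_le_mul_of_nonneg_right (colA j)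
          positivity
      _ = hM.eigenvalues j := by rw [one_mul, colY j]
  calc ∑ i : Fin m, (A * W) i j * (Y * W) i j
      ≤ |∑ i : Fin m, (A * W) i j * (Y * W) i j| := le_abs_self _
    _ = Real.sqrt ((∑ i : Fin m, (A * W) i j * (Y * W) i j) ^ 2) :=
        (Real.sqrt_sq_eq_abs _).symm
    _ ≤ Real.sqrt (hM.eigenvalues j) := Real.sqrt_le_sqrt hb

lemma mulc_sum {m n : ℕ} (c : ℝ) (f : Fin m → Fin n → ℝ) :
    ∑ i, ∑ j, c * f i j = c * ∑ i, ∑ j, f i j := by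
  rw [Finset.mul_sum]
  exact Finset.sum_congr rfl fun i _ => by rw [Finset.mul_sum]

lemma half_sum {m n : ℕ} (f : Fin m → Fin n → ℝ) :
    ∑ i, ∑ j, f i j / 2 = (1 / 2) * ∑ i, ∑ j, f i j := by
  rw [Finset.mul_sum]
  exact Finset.sum_congr rfl fun i _ => by
    rw [Finset.mul_sum]
    exact Finset.sum_congr rfl fun j _ => by ring

lemma sum_add3 {m n : ℕ} (A B C : Fin m → Fin n → ℝ) :
    ∑ i, ∑ j, (A i j + B i j + C i j)
      = (∑ i, ∑ j, A i j) + (∑ i, ∑ j, B i j) + (∑ i, ∑ j, C i j) := by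
  simp [Finset.sum_add_distrib]

lemma scalar_prox {τ s y : ℝ} (hτ : 0 < τ) (hs : 0 ≤ s) :
    τ * max (s - τ) 0 + (max (s - τ) 0 - s) ^ 2 / 2 + (y - max (s - τ) 0) ^ 2 / 2
      ≤ τ * |y| + (y - s) ^ 2 / 2 := by
  rcases le_or_gt s τ with h | h
  · rw [max_eq_right (by linarith)]
    rcases abs_cases y with ⟨hy, hy2⟩ | ⟨hy, hy2⟩
    · rw [hy]; nlinarith [mul_nonneg (sub_nonneg.2 h) hy2]
    · rw [hy]; nlinarith [mul_nonneg (by linarith : (0:ℝ) ≤ τ + s) (by linarith : 0 ≤ -y)]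
  · rw [max_eq_left (by linarith)]
    rcases abs_cases y with ⟨hy, hy2⟩ | ⟨hy, hy2⟩
    · rw [hy]; nlinarith
    · rw [hy]; nlinarith

end SVTAux

/-- Singular value thresholding solves the nuclear-norm proximal problem:
if `T = U * S * Vᵀ` with `U, V` orthogonal and `S` (rectangular) diagonal with
nonnegative entries, and `τ > 0`, then `SVT_τ(T) := U * max(S − τ, 0) * Vᵀ`
is the unique minimizer of `X ↦ τ‖X‖_* + ½‖X − T‖_F²`. -/
theorem svt_is_prox_of_nuclearNorm {m n : ℕ} (τ : ℝ) (hτ : 0 < τ)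
    (T : Matrix (Fin m) (Fin n) ℝ)
    (U : Matrix (Fin m) (Fin m) ℝ) (V : Matrix (Fin n) (Fin n) ℝ)
    (S : Matrix (Fin m) (Fin n) ℝ)
    (hU : Uᵀ * U = 1) (hV : Vᵀ * V = 1)
    (hSdiag : ∀ (i : Fin m) (j : Fin n), (i : ℕ) ≠ (j : ℕ) → S i j = 0)
    (hSnn : ∀ i j, 0 ≤ S i j)
    (hT : T = U * S * Vᵀ) :
    (∀ X : Matrix (Fin m) (Fin n) ℝ,
        τ * nuclearNorm (U * (Matrix.of fun i j => max (S i j - τ) 0) * Vᵀ) +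
            (1 / 2) * frobNorm (U * (Matrix.of fun i j => max (S i j - τ) 0) * Vᵀ - T) ^ 2 ≤
          τ * nuclearNorm X + (1 / 2) * frobNorm (X - T) ^ 2) ∧
      ∀ X : Matrix (Fin m) (Fin n) ℝ,
        τ * nuclearNorm X + (1 / 2) * frobNorm (X - T) ^ 2 =
            τ * nuclearNorm (U * (Matrix.of fun i j => max (S i j - τ) 0) * Vᵀ) +
              (1 / 2) * frobNorm (U * (Matrix.of fun i j => max (S i j - τ) 0) * Vᵀ - T) ^ 2 →
          X = U * (Matrix.of fun i j => max (S i j - τ) 0) * Vᵀ := by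
  classical
  open SVTAux in
  set D : Matrix (Fin m) (Fin n) ℝ := Matrix.of fun i j => max (S i j - τ) 0 with hDdef
  have hUU : U * Uᵀ = 1 := mul_eq_one_comm.mp hU
  have hVV : V * Vᵀ = 1 := mul_eq_one_comm.mp hV
  -- D vanishes off the diagonal
  have hD0 : ∀ (i : Fin m) (j : Fin n), (i : ℕ) ≠ (j : ℕ) → D i j = 0 := by
    intro i j h
    simp only [hDdef, Matrix.of_apply, hSdiag i j h]
    rw [max_eq_right (by linarith)]
  have hDnn : ∀ i j, 0 ≤ D i j := fun i j => le_max_right _ _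
  -- diagonal values of D
  set dval : Fin n → ℝ := fun j => if h : (j : ℕ) < m then D ⟨(j : ℕ), h⟩ j else 0
    with hdvaldef
  have hdvalnn : ∀ j, 0 ≤ dval j := by
    intro j; rw [hdvaldef]; dsimp only
    split_ifs with h
    · exact hDnn _ _
    · exact le_refl 0
  -- Gram matrix of D is diagonal
  have hDD : Dᵀ * D = diagonal (fun j => dval j ^ 2) := by
    ext k l
    rw [Matrix.mul_apply]
    by_cases hkl : k = l
    · subst hkl
      rw [Matrix.diagonal_apply_eq, hdvaldef]
      dsimp only
      by_cases hk : (k : ℕ) < m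
      · rw [dif_pos hk, Finset.sum_eq_single (⟨(k : ℕ), hk⟩ : Fin m)]
        · rw [Matrix.transpose_apply, sq]
        · intro b _ hb
          rw [Matrix.transpose_apply, hD0 b k (fun hbk => hb (Fin.ext hbk)), zero_mul]
        · intro h; exact absurd (Finset.mem_univ _) h
      · rw [dif_neg hk]
        rw [show (0:ℝ)^2 = 0 by ring]
        refine Finset.sum_eq_zero fun i _ => ?_
        rw [Matrix.transpose_apply,
          hD0 i k (fun hik => hk (lt_of_eq_of_lt (Eq.symm hik) i.isLt)), zero_mul]
    · rw [Matrix.diagonal_apply_ne _ hkl]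
      refine Finset.sum_eq_zero fun i _ => ?_
      rw [Matrix.transpose_apply]
      by_cases hik : (i : ℕ) = (k : ℕ)
      · rw [hD0 i l (fun hil => hkl (Fin.ext (hik.symm.trans hil))), mul_zero]
      · rw [hD0 i k hik, zero_mul]
  have hDnuc : nuclearNorm D = ∑ j, dval j := by
    rw [nuclearNorm_of_diag_gram hDD]
    exact Finset.sum_congr rfl fun j _ => Real.sqrt_sq (hdvalnn j)
  -- diagonal indicator sum for D
  have hDsum : ∑ i : Fin m, ∑ j : Fin n, (if (i : ℕ) = (j : ℕ) then D i j else 0)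
      = ∑ j, dval j := by
    rw [Finset.sum_comm]
    refine Finset.sum_congr rfl fun j _ => ?_
    rw [hdvaldef]; dsimp only
    by_cases h : (j : ℕ) < m
    · rw [dif_pos h, Finset.sum_eq_single (⟨(j : ℕ), h⟩ : Fin m)]
      · rw [if_pos rfl]
      · intro b _ hb
        rw [if_neg (fun hbk => hb (Fin.ext hbk))]
      · intro h'; exact absurd (Finset.mem_univ _) h'
    · rw [dif_neg h]
      refine Finset.sum_eq_zero fun i _ => ?_
      rw [if_neg (fun hik => h (lt_of_eq_of_lt (Eq.symm hik) i.isLt))]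
  -- the reduced objective
  set val : Matrix (Fin m) (Fin n) ℝ → ℝ :=
    fun Z => τ * nuclearNorm Z + (1 / 2) * frobNorm (Z - S) ^ 2 with hvaldef
  have frobsub : ∀ Z W : Matrix (Fin m) (Fin n) ℝ,
      frobNorm (Z - W) ^ 2 = ∑ i, ∑ j, (Z i j - W i j) ^ 2 := by
    intro Z W
    rw [frob_sq]
    exact Finset.sum_congr rfl fun i _ => Finset.sum_congr rfl fun j _ => by
      rw [Matrix.sub_apply]
  -- master inequality
  have master : ∀ Y : Matrix (Fin m) (Fin n) ℝ,
      val D + (1 / 2) * ∑ i, ∑ j, (Y i j - D i j) ^ 2 ≤ val Y := by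
    intro Y
    have entry : ∀ (i : Fin m) (j : Fin n),
        τ * (if (i : ℕ) = (j : ℕ) then D i j else 0) + (D i j - S i j) ^ 2 / 2
            + (Y i j - D i j) ^ 2 / 2
          ≤ τ * (if (i : ℕ) = (j : ℕ) then |Y i j| else 0) + (Y i j - S i j) ^ 2 / 2 := by
      intro i j
      by_cases h : (i : ℕ) = (j : ℕ)
      · rw [if_pos h, if_pos h]
        have hD : D i j = max (S i j - τ) 0 := rfl
        rw [hD]
        exact scalar_prox hτ (hSnn i j)
      · rw [if_neg h, if_neg h, hD0 i j h, hSdiag i j h]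
        apply le_of_eq
        ring
    have hsum : ∑ i : Fin m, ∑ j : Fin n,
        (τ * (if (i : ℕ) = (j : ℕ) then D i j else 0) + (D i j - S i j) ^ 2 / 2
          + (Y i j - D i j) ^ 2 / 2)
        ≤ ∑ i : Fin m, ∑ j : Fin n,
        (τ * (if (i : ℕ) = (j : ℕ) then |Y i j| else 0) + (Y i j - S i j) ^ 2 / 2) :=
      Finset.sum_le_sum fun i _ => Finset.sum_le_sum fun j _ => entry i j
    have lhs_eq : ∑ i : Fin m, ∑ j : Fin n,
        (τ * (if (i : ℕ) = (j : ℕ) then D i j else 0) + (D i j - S i j) ^ 2 / 2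
          + (Y i j - D i j) ^ 2 / 2)
        = val D + (1 / 2) * ∑ i, ∑ j, (Y i j - D i j) ^ 2 := by
      rw [hvaldef]; dsimp only
      rw [sum_add3 (fun i j => τ * (if (i : ℕ) = (j : ℕ) then D i j else 0))
        (fun i j => (D i j - S i j) ^ 2 / 2) (fun i j => (Y i j - D i j) ^ 2 / 2),
        mulc_sum τ (fun i j => (if (i : ℕ) = (j : ℕ) then D i j else 0)),
        half_sum (fun i j => (D i j - S i j) ^ 2),
        half_sum (fun i j => (Y i j - D i j) ^ 2), hDsum, hDnuc, frobsub]
    have rhs_le : ∑ i : Fin m, ∑ j : Fin n,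
        (τ * (if (i : ℕ) = (j : ℕ) then |Y i j| else 0) + (Y i j - S i j) ^ 2 / 2)
        ≤ val Y := by
      rw [hvaldef]; dsimp only
      rw [frobsub]
      simp only [Finset.sum_add_distrib]
      rw [mulc_sum τ (fun i j => (if (i : ℕ) = (j : ℕ) then |Y i j| else 0)),
        half_sum (fun i j => (Y i j - S i j) ^ 2)]
      have := diag_abs_le_nuclearNorm Y
      nlinarith [this, hτ.le]
    calc val D + (1 / 2) * ∑ i, ∑ j, (Y i j - D i j) ^ 2 = _ := lhs_eq.symm
      _ ≤ _ := hsum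
      _ ≤ val Y := rhs_le
  -- change of variables
  have objeq : ∀ X : Matrix (Fin m) (Fin n) ℝ,
      τ * nuclearNorm X + (1 / 2) * frobNorm (X - T) ^ 2 = val (Uᵀ * X * V) := by
    intro X
    have hX : X = U * (Uᵀ * X * V) * Vᵀ := by
      calc X = (U * Uᵀ) * X * (V * Vᵀ) := by rw [hUU, hVV, Matrix.one_mul, Matrix.mul_one]
        _ = U * (Uᵀ * X * V) * Vᵀ := by simp only [Matrix.mul_assoc]
    rw [hvaldef]; dsimp only
    have hX' : U * (Uᵀ * X * V) * Vᵀ - T = U * ((Uᵀ * X * V) - S) * Vᵀ := by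
      rw [Matrix.mul_sub, Matrix.sub_mul, ← hX, ← hT]
    conv_lhs => rw [hX]
    rw [hX', nuclearNorm_conj hU hVV, frob_conj hU hV]
  have objB : τ * nuclearNorm (U * D * Vᵀ) + (1 / 2) * frobNorm (U * D * Vᵀ - T) ^ 2
      = val D := by
    have hsub : U * D * Vᵀ - T = U * (D - S) * Vᵀ := by
      rw [Matrix.mul_sub, Matrix.sub_mul, ← hT]
    rw [hsub, nuclearNorm_conj hU hVV, frob_conj hU hV]
  constructor
  · intro X
    rw [objB, objeq X]
    have h := master (Uᵀ * X * V)
    have hnn : 0 ≤ (1 / 2 : ℝ) * ∑ i, ∑ j, ((Uᵀ * X * V) i j - D i j) ^ 2 := by positivity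
    exact (le_add_of_nonneg_right hnn).trans h
  · intro X hX
    rw [objB, objeq X] at hX
    have h := master (Uᵀ * X * V)
    have hzero : ∑ i, ∑ j, ((Uᵀ * X * V) i j - D i j) ^ 2 ≤ 0 := by
      rw [hX] at h
      nlinarith [h]
    have hYD : Uᵀ * X * V = D := by
      ext i j
      have hall : ∀ i ∈ Finset.univ, (∑ j, ((Uᵀ * X * V) i j - D i j) ^ 2) = 0 := by
        rw [← Finset.sum_eq_zero_iff_of_nonneg (fun i _ => by positivity)]
        exact le_antisymm hzero (by positivity)
      have hall2 := (Finset.sum_eq_zero_iff_of_nonneg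
        (fun j (_ : j ∈ Finset.univ) => sq_nonneg ((Uᵀ * X * V) i j - D i j))).mp
          (hall i (Finset.mem_univ i)) j (Finset.mem_univ j)
      have := pow_eq_zero_iff (n := 2) (by norm_num) |>.mp hall2
      linarith [this]
    calc X = (U * Uᵀ) * X * (V * Vᵀ) := by rw [hUU, hVV, Matrix.one_mul, Matrix.mul_one]
      _ = U * (Uᵀ * X * V) * Vᵀ := by simp only [Matrix.mul_assoc]
      _ = U * D * Vᵀ := by rw [hYD]
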